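/- Let N = {1,…,n}, fix a maximal order k, and define the Faithful Shapley Interaction Index of a game ν at S ⊆ N with s := |S| ≤ k as φ^FSII_S(ν) := m_S(ν) + (−1)^{k−s} · (s/(k+s)) · C(k, s) · ∑_{T ⊇ S, |T| > k} ( C(|T|−1, k) / C(|T|+k−1, k+s) ) · m_T(ν). Let ν_tree(T) := ∑_{j ∈ 𝓛} c_j · 1[R_j ⊆ T ⊆ N \ L_j] be a tree-based proxy with disjoint L_j, R_j ⊆ N. Then φ^FSII_S(ν_tree) = ∑_{j ∈ 𝓛 : S ⊆ L_j ∪ R_j} c_j · ( (−1)^{|S ∩ L_j|} · 1[R_j ⊆ S] + ∑_{i = max(0, k−r−u+1)}^{ℓ−u} (−1)^{u+i+k−s} · (s/(k+s)) · C(k, s) · C(ℓ−u, i) · C(r+i+u−1, k) / C(r+u+i+k−1, k+s) ), where for each leaf j we write ℓ := |L_j|, r := |R_j|, u := |S ∩ L_j|. -/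

import Mathlib

open Finset

/-- Möbius transform of a game `ν` on `N = {1,…,n}` (players modeled as `Fin n`):
`m_T(ν) = ∑_{L ⊆ T} (−1)^{|T|−|L|} ν(L)`. -/
noncomputable def moebius {n : ℕ} (ν : Finset (Fin n) → ℝ) (T : Finset (Fin n)) : ℝ :=
  ∑ L ∈ T.powerset, (-1 : ℝ) ^ (T.card - L.card) * ν L

/-- Faithful Shapley Interaction Index of maximal order `k`:
`φ^FSII_S(ν) = m_S(ν) + (−1)^{k−s} (s/(k+s)) C(k, s)
  ∑_{T ⊇ S, |T| > k} (C(|T|−1, k)/C(|T|+k−1, k+s)) m_T(ν)`. -/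
noncomputable def fsii {n : ℕ} (k : ℕ) (ν : Finset (Fin n) → ℝ) (S : Finset (Fin n)) : ℝ :=
  moebius ν S + (-1 : ℝ) ^ (k - S.card)
      * ((S.card : ℝ) / ((k : ℝ) + S.card)) * (Nat.choose k S.card : ℝ) *
    ∑ T ∈ univ.filter (fun T => S ⊆ T ∧ k < T.card),
      ((Nat.choose (T.card - 1) k : ℝ) / (Nat.choose (T.card + k - 1) (k + S.card) : ℝ))
        * moebius ν T

lemma neg_one_sub_pow {q m : ℕ} (h : q ≤ m) : (-1 : ℝ) ^ (m - q) = (-1) ^ m * (-1) ^ q := by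
  have h1 : (-1 : ℝ) ^ (m - q) * (-1) ^ q = (-1) ^ m := by
    rw [← pow_add, Nat.sub_add_cancel h]
  have h2 : (-1 : ℝ) ^ q * (-1) ^ q = 1 := by
    rw [← pow_add, ← two_mul, pow_mul]; norm_num
  calc (-1 : ℝ) ^ (m - q) = (-1 : ℝ) ^ (m-q) * ((-1)^q * (-1)^q) := by rw [h2, mul_one]
    _ = ((-1 : ℝ)^(m-q) * (-1)^q) * (-1)^q := by ring
    _ = (-1)^m * (-1)^q := by rw [h1]


lemma moebius_indicator {n : ℕ} (R L : Finset (Fin n)) (hd : Disjoint L R) (T : Finset (Fin n)) :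
    moebius (fun Q => if R ⊆ Q ∧ Q ⊆ univ \ L then (1:ℝ) else 0) T
      = if R ⊆ T ∧ T ⊆ R ∪ L then (-1:ℝ)^(T ∩ L).card else 0 := by
  classical
  unfold moebius
  have hiff : ∀ Q : Finset (Fin n), (R ⊆ Q ∧ Q ⊆ univ \ L) ↔ (R ⊆ Q ∧ Disjoint Q L) := by
    intro Q; rw [subset_sdiff]; simp
  simp only [hiff, mul_ite, mul_one, mul_zero]
  rw [← sum_filter]
  by_cases hR : R ⊆ T
  · -- filter set = image of (T \ (R ∪ L)).powerset under (· ∪ R)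
    set M := T \ (R ∪ L) with hM
    have hset : T.powerset.filter (fun Q => R ⊆ Q ∧ Disjoint Q L)
        = M.powerset.image (· ∪ R) := by
      ext Q
      simp only [mem_filter, mem_powerset, mem_image]
      constructor
      · rintro ⟨hQT, hRQ, hQL⟩
        refine ⟨Q \ R, ?_, ?_⟩
        · intro x hx
          rcases mem_sdiff.mp hx with ⟨hxQ, hxR⟩
          refine mem_sdiff.mpr ⟨hQT hxQ, fun h => ?_⟩
          rcases mem_union.mp h with h | h
          · exact hxR h
          · exact (disjoint_left.mp hQL hxQ) h
        · rw [sdiff_union_of_subset hRQ]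
      · rintro ⟨A, hA, rfl⟩
        have hAM : A ⊆ M := hA
        have hAT : A ⊆ T := hAM.trans sdiff_subset
        refine ⟨union_subset hAT hR, subset_union_right, ?_⟩
        rw [disjoint_union_left]
        constructor
        · exact disjoint_left.mpr fun x hxA hxL =>
            (mem_sdiff.mp (hAM hxA)).2 (mem_union_right _ hxL)
        · exact hd.symm
    rw [hset, sum_image]
    swap
    · intro A hA B hB hAB
      have : ∀ C : Finset (Fin n), C ∈ M.powerset → (C ∪ R) \ R = C := by
        intro C hC
        rw [union_sdiff_right, Finset.sdiff_eq_self_iff_disjoint]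
        exact disjoint_left.mpr fun x hxC hxR =>
          (mem_sdiff.mp ((mem_powerset.mp hC) hxC)).2 (mem_union_left _ hxR)
      rw [← this A hA, ← this B hB, show A ∪ R = B ∪ R from hAB]
    -- cardinalities
    have hTcard : T.card = M.card + R.card + (T ∩ L).card := by
      have h1 : (T ∩ (R ∪ L)).card + (T \ (R ∪ L)).card = T.card :=
        card_inter_add_card_sdiff T (R ∪ L)
      have h2 : T ∩ (R ∪ L) = R ∪ (T ∩ L) := by
        ext x; simp only [mem_inter, mem_union]
        constructor
        · rintro ⟨hxT, hx | hx⟩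
          · exact Or.inl hx
          · exact Or.inr ⟨hxT, hx⟩
        · rintro (hx | ⟨hxT, hxL⟩)
          · exact ⟨hR hx, Or.inl hx⟩
          · exact ⟨hxT, Or.inr hxL⟩
      have h3 : Disjoint R (T ∩ L) :=
        (hd.symm.mono_right inter_subset_right)
      rw [h2, card_union_of_disjoint h3] at h1
      rw [hM]
      omega
    have hterm : ∀ A ∈ M.powerset,
        (-1 : ℝ) ^ (T.card - (A ∪ R).card)
          = (-1) ^ (T ∩ L).card * ((-1) ^ M.card * (-1) ^ A.card) := by
      intro A hA
      have hAM : A ⊆ M := mem_powerset.mp hA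
      have hAR : Disjoint A R := disjoint_left.mpr fun x hxA hxR =>
        (mem_sdiff.mp (hAM hxA)).2 (mem_union_left _ hxR)
      rw [card_union_of_disjoint hAR]
      have hAle : A.card ≤ M.card := card_le_card hAM
      have : T.card - (A.card + R.card) = (M.card - A.card) + (T ∩ L).card := by omega
      rw [this, pow_add, neg_one_sub_pow hAle]
      ring
    rw [sum_congr rfl hterm, ← mul_sum, ← mul_sum]
    have hps : (∑ A ∈ M.powerset, (-1 : ℝ) ^ A.card) = if M = ∅ then 1 else 0 := by
      have := @Finset.sum_powerset_neg_one_pow_card (Fin n) _ M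
      exact_mod_cast congrArg (Int.cast : ℤ → ℝ) this
    rw [hps]
    by_cases hMe : M = ∅
    · have hTRL : T ⊆ R ∪ L := by
        intro x hx
        by_contra hxn
        have : x ∈ M := mem_sdiff.mpr ⟨hx, hxn⟩
        simp [hMe] at this
      simp [hMe, hR, hTRL]
    · have hTRL : ¬ T ⊆ R ∪ L := by
        intro hsub
        exact hMe (eq_empty_of_forall_notMem fun x hx =>
          (mem_sdiff.mp hx).2 (hsub (mem_sdiff.mp hx).1))
      simp [hMe, hTRL]
  · have : T.powerset.filter (fun Q => R ⊆ Q ∧ Disjoint Q L) = ∅ := by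
      refine eq_empty_of_forall_notMem fun Q hQ => ?_
      rcases mem_filter.mp hQ with ⟨hQT, hRQ, _⟩
      exact hR (hRQ.trans (mem_powerset.mp hQT))
    rw [this]
    simp [hR]

lemma per_leaf {n : ℕ} (k : ℕ) (L R S : Finset (Fin n)) (hd : Disjoint L R) (hS : S ⊆ L ∪ R) :
    (if R ⊆ S ∧ S ⊆ R ∪ L then (-1:ℝ)^(S ∩ L).card else 0)
      + (-1:ℝ)^(k - S.card) * ((S.card:ℝ)/((k:ℝ)+S.card)) * (Nat.choose k S.card : ℝ)
        * ∑ T ∈ univ.filter (fun T => S ⊆ T ∧ k < T.card),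
            ((Nat.choose (T.card - 1) k : ℝ) / (Nat.choose (T.card + k - 1) (k + S.card) : ℝ))
              * (if R ⊆ T ∧ T ⊆ R ∪ L then (-1:ℝ)^(T ∩ L).card else 0)
    = (-1:ℝ)^(S ∩ L).card * (if R ⊆ S then (1:ℝ) else 0)
      + ∑ i ∈ Finset.Icc (k + 1 - (R.card + (S ∩ L).card)) (L.card - (S ∩ L).card),
          (-1:ℝ)^((S ∩ L).card + i + (k - S.card))
            * ((S.card:ℝ)/((k:ℝ)+S.card)) * (Nat.choose k S.card : ℝ)
            * (Nat.choose (L.card - (S ∩ L).card) i : ℝ)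
            * (Nat.choose (R.card + i + (S ∩ L).card - 1) k : ℝ)
            / (Nat.choose (R.card + (S ∩ L).card + i + k - 1) (k + S.card) : ℝ) := by
  classical
  have hS' : S ⊆ R ∪ L := by rwa [union_comm]
  have hfirst : (if R ⊆ S ∧ S ⊆ R ∪ L then (-1:ℝ)^(S ∩ L).card else 0)
      = (-1:ℝ)^(S ∩ L).card * (if R ⊆ S then (1:ℝ) else 0) := by
    by_cases hRS : R ⊆ S <;> simp [hRS, hS']
  rw [hfirst]
  congr 1
  set u := (S ∩ L).card with hu
  set r := R.card with hr
  set P := L \ S with hP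
  have hAsub : ∀ A : Finset (Fin n), A ⊆ P → Disjoint A (S ∪ R) := by
    intro A hA
    rw [disjoint_union_right]
    constructor
    · exact disjoint_left.mpr fun x hxA hxS => (mem_sdiff.mp (hA hxA)).2 hxS
    · exact disjoint_left.mpr fun x hxA hxR =>
        (disjoint_left.mp hd (mem_sdiff.mp (hA hxA)).1) hxR
  have hSRcard : (S ∪ R).card = r + u := by
    have h1 := card_union_add_card_inter S R
    have e : (S ∩ L) ∪ (S ∩ R) = S := by
      rw [← inter_union_distrib_left, inter_eq_left.mpr hS]
    have hdis : Disjoint (S ∩ L) (S ∩ R) := hd.mono inter_subset_right inter_subset_right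
    have h2 : u + (S ∩ R).card = S.card := by
      rw [hu, ← card_union_of_disjoint hdis, e]
    omega
  have hPcard : P.card = L.card - u := by
    have h1 := card_sdiff_add_card_inter L S
    have h2 : (L ∩ S).card = u := by rw [hu, inter_comm]
    rw [hP]
    omega
  have hTL : ∀ A : Finset (Fin n), A ⊆ P → ((S ∪ R ∪ A) ∩ L).card = u + A.card := by
    intro A hA
    have hAL : A ⊆ L := fun x hx => (mem_sdiff.mp (hA hx)).1
    have e : (S ∪ R ∪ A) ∩ L = (S ∩ L) ∪ A := by
      ext x
      simp only [mem_inter, mem_union]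
      constructor
      · rintro ⟨hx | hx, hxL⟩
        · rcases hx with hx | hx
          · exact Or.inl ⟨hx, hxL⟩
          · exact absurd hxL (disjoint_right.mp hd hx)
        · exact Or.inr hx
      · rintro (⟨hxS, hxL⟩ | hxA)
        · exact ⟨Or.inl (Or.inl hxS), hxL⟩
        · exact ⟨Or.inr hxA, hAL hxA⟩
    have hdis : Disjoint (S ∩ L) A :=
      disjoint_right.mpr fun x hxA hxSL => (mem_sdiff.mp (hA hxA)).2 (mem_inter.mp hxSL).1
    rw [e, card_union_of_disjoint hdis]
  have hTcard : ∀ A : Finset (Fin n), A ⊆ P → (S ∪ R ∪ A).card = r + u + A.card := by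
    intro A hA
    rw [card_union_of_disjoint (hAsub A hA).symm, hSRcard]
  have key : ∑ T ∈ univ.filter (fun T => S ⊆ T ∧ k < T.card),
        ((Nat.choose (T.card - 1) k : ℝ) / (Nat.choose (T.card + k - 1) (k + S.card) : ℝ))
          * (if R ⊆ T ∧ T ⊆ R ∪ L then (-1:ℝ)^(T ∩ L).card else 0)
      = ∑ i ∈ Finset.Icc (k + 1 - (r + u)) P.card,
          (Nat.choose P.card i : ℝ) *
            ((Nat.choose (r + u + i - 1) k : ℝ) / (Nat.choose (r + u + i + k - 1) (k + S.card) : ℝ)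
              * (-1:ℝ)^(u + i)) := by
    simp only [mul_ite, mul_zero]
    rw [← sum_filter, filter_filter]
    have himg : univ.filter (fun T => (S ⊆ T ∧ k < T.card) ∧ (R ⊆ T ∧ T ⊆ R ∪ L))
        = (P.powerset.filter (fun A => k < r + u + A.card)).image (fun A => S ∪ R ∪ A) := by
      ext T
      simp only [mem_filter, mem_powerset, mem_image, mem_univ, true_and]
      constructor
      · rintro ⟨⟨hST, hkT⟩, hRT, hTRL⟩
        have hsub : S ∪ R ⊆ T := union_subset hST hRT
        have hc1 := card_sdiff_add_card_inter T (S ∪ R)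
        have hc2 : (T ∩ (S ∪ R)).card = r + u := by
          rw [inter_eq_right.mpr hsub, hSRcard]
        refine ⟨T \ (S ∪ R), ⟨?_, by omega⟩, ?_⟩
        · intro x hx
          rcases mem_sdiff.mp hx with ⟨hxT, hxSR⟩
          rcases mem_union.mp (hTRL hxT) with h | h
          · exact absurd (mem_union_right _ h) hxSR
          · exact mem_sdiff.mpr ⟨h, fun hxS => hxSR (mem_union_left _ hxS)⟩
        · rw [union_sdiff_of_subset hsub]
      · rintro ⟨A, hAmem, rfl⟩
        obtain ⟨hAP, hkA⟩ := hAmem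
        have hAL : A ⊆ L := fun x hx => (mem_sdiff.mp (hAP hx)).1
        refine ⟨⟨subset_union_left.trans subset_union_left,
            by rw [hTcard A hAP]; omega⟩,
          subset_union_right.trans subset_union_left, ?_⟩
        intro x hx
        rcases mem_union.mp hx with hx | hx
        · rcases mem_union.mp hx with hx | hx
          · exact hS' hx
          · exact mem_union_left _ hx
        · exact mem_union_right _ (hAL hx)
    rw [himg, sum_image]
    swap
    · intro A hA B hB hAB
      have hrec : ∀ C : Finset (Fin n), C ∈ P.powerset.filter (fun A => k < r + u + A.card) →
          (S ∪ R ∪ C) \ (S ∪ R) = C := by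
        intro C hC
        rw [union_comm (S ∪ R) C, union_sdiff_right,
          Finset.sdiff_eq_self_iff_disjoint.mpr]
        exact hAsub C (mem_powerset.mp (mem_filter.mp hC).1)
      rw [← hrec A hA, ← hrec B hB, show S ∪ R ∪ A = S ∪ R ∪ B from hAB]
    have step1 : ∀ A ∈ P.powerset.filter (fun A => k < r + u + A.card),
        ((Nat.choose ((S ∪ R ∪ A).card - 1) k : ℝ)
            / (Nat.choose ((S ∪ R ∪ A).card + k - 1) (k + S.card) : ℝ))
          * (-1:ℝ)^((S ∪ R ∪ A) ∩ L).card
        = (fun i : ℕ => (Nat.choose (r + u + i - 1) k : ℝ)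
            / (Nat.choose (r + u + i + k - 1) (k + S.card) : ℝ) * (-1:ℝ)^(u + i)) A.card := by
      intro A hA
      have hAP : A ⊆ P := mem_powerset.mp (mem_filter.mp hA).1
      rw [hTcard A hAP, hTL A hAP]
    rw [sum_congr rfl step1, sum_filter, Finset.sum_powerset]
    have inner : ∀ j ∈ range (P.card + 1),
        ∑ A ∈ powersetCard j P, (if k < r + u + A.card then
          (fun i : ℕ => (Nat.choose (r + u + i - 1) k : ℝ)
            / (Nat.choose (r + u + i + k - 1) (k + S.card) : ℝ) * (-1:ℝ)^(u + i)) A.card else 0)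
        = (Nat.choose P.card j : ℝ) * (if k < r + u + j then
          (fun i : ℕ => (Nat.choose (r + u + i - 1) k : ℝ)
            / (Nat.choose (r + u + i + k - 1) (k + S.card) : ℝ) * (-1:ℝ)^(u + i)) j else 0) := by
      intro j _
      rw [sum_congr rfl fun A hA => by rw [(mem_powersetCard.mp hA).2],
        sum_const, card_powersetCard, nsmul_eq_mul]
    rw [sum_congr rfl inner]
    simp only [mul_ite, mul_zero]
    rw [← sum_filter]
    refine sum_congr ?_ fun i _ => rfl
    ext i
    simp only [mem_filter, mem_range, mem_Icc]
    omega
  rw [key, hPcard, mul_sum]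
  refine sum_congr rfl fun i hi => ?_
  rw [show r + i + u - 1 = r + u + i - 1 from by omega,
    pow_add ((-1:ℝ)) (u + i) (k - S.card)]
  ring

/-- Exact extraction of the Faithful Shapley Interaction Index from a tree-based
proxy: leaf-wise closed form with `ℓ = |L_j|`, `r = |R_j|`, `u = |S ∩ L_j|`,
`s = |S|`, summing `i` from `max(0, k−r−u+1)` to `ℓ−u`. -/
theorem fsii_tree_extraction {n k : ℕ} {ι : Type*} [Fintype ι]
    (c : ι → ℝ) (L R : ι → Finset (Fin n))
    (hdisj : ∀ j, Disjoint (L j) (R j))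
    (νtree : Finset (Fin n) → ℝ)
    (hν : ∀ T, νtree T = ∑ j, c j * (if R j ⊆ T ∧ T ⊆ univ \ L j then (1 : ℝ) else 0))
    (S : Finset (Fin n)) (hSk : S.card ≤ k) :
    fsii k νtree S
      = ∑ j ∈ univ.filter (fun j => S ⊆ L j ∪ R j),
          c j * ((-1 : ℝ) ^ (S ∩ L j).card * (if R j ⊆ S then (1 : ℝ) else 0)
            + ∑ i ∈ Finset.Icc (k + 1 - ((R j).card + (S ∩ L j).card))
                  ((L j).card - (S ∩ L j).card),
                (-1 : ℝ) ^ ((S ∩ L j).card + i + (k - S.card))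
                  * ((S.card : ℝ) / ((k : ℝ) + S.card)) * (Nat.choose k S.card : ℝ)
                  * (Nat.choose ((L j).card - (S ∩ L j).card) i : ℝ)
                  * (Nat.choose ((R j).card + i + (S ∩ L j).card - 1) k : ℝ)
                  / (Nat.choose ((R j).card + (S ∩ L j).card + i + k - 1)
                      (k + S.card) : ℝ)) := by
  classical
  have hmoeb : ∀ T, moebius νtree T
      = ∑ j, c j * (if R j ⊆ T ∧ T ⊆ R j ∪ L j then (-1:ℝ)^(T ∩ L j).card else 0) := by
    intro T
    have : moebius νtree T
        = moebius (fun Q => ∑ j, c j * (if R j ⊆ Q ∧ Q ⊆ univ \ L j then (1 : ℝ) else 0)) T := by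
      unfold moebius
      exact sum_congr rfl fun Q _ => by rw [hν]
    rw [this]
    unfold moebius
    simp_rw [mul_sum]
    rw [sum_comm]
    refine sum_congr rfl fun j _ => ?_
    rw [← moebius_indicator (R j) (L j) (hdisj j) T]
    unfold moebius
    rw [mul_sum]
    refine sum_congr rfl fun Q _ => by ring
  unfold fsii
  simp_rw [hmoeb]
  have swap : (∑ T ∈ univ.filter (fun T => S ⊆ T ∧ k < T.card),
        ((Nat.choose (T.card - 1) k : ℝ) / (Nat.choose (T.card + k - 1) (k + S.card) : ℝ))
          * ∑ j, c j * (if R j ⊆ T ∧ T ⊆ R j ∪ L j then (-1:ℝ)^(T ∩ L j).card else 0))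
      = ∑ j, c j * ∑ T ∈ univ.filter (fun T => S ⊆ T ∧ k < T.card),
          ((Nat.choose (T.card - 1) k : ℝ) / (Nat.choose (T.card + k - 1) (k + S.card) : ℝ))
            * (if R j ⊆ T ∧ T ⊆ R j ∪ L j then (-1:ℝ)^(T ∩ L j).card else 0) := by
    simp_rw [mul_sum]
    rw [sum_comm]
    exact sum_congr rfl fun j _ => sum_congr rfl fun T _ => by ring
  rw [swap, mul_sum, ← sum_add_distrib, sum_filter]
  refine sum_congr rfl fun j _ => ?_
  by_cases hj : S ⊆ L j ∪ R j
  · rw [if_pos hj]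
    have hpl := per_leaf k (L j) (R j) S (hdisj j) hj
    calc c j * (if R j ⊆ S ∧ S ⊆ R j ∪ L j then (-1:ℝ)^(S ∩ L j).card else 0)
          + (-1 : ℝ) ^ (k - S.card) * ((S.card : ℝ) / ((k : ℝ) + S.card))
            * (Nat.choose k S.card : ℝ)
            * (c j * ∑ T ∈ univ.filter (fun T => S ⊆ T ∧ k < T.card),
              ((Nat.choose (T.card - 1) k : ℝ)
                / (Nat.choose (T.card + k - 1) (k + S.card) : ℝ))
                * (if R j ⊆ T ∧ T ⊆ R j ∪ L j then (-1:ℝ)^(T ∩ L j).card else 0))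
        = c j * ((if R j ⊆ S ∧ S ⊆ R j ∪ L j then (-1:ℝ)^(S ∩ L j).card else 0)
          + (-1 : ℝ) ^ (k - S.card) * ((S.card : ℝ) / ((k : ℝ) + S.card))
            * (Nat.choose k S.card : ℝ)
            * ∑ T ∈ univ.filter (fun T => S ⊆ T ∧ k < T.card),
              ((Nat.choose (T.card - 1) k : ℝ)
                / (Nat.choose (T.card + k - 1) (k + S.card) : ℝ))
                * (if R j ⊆ T ∧ T ⊆ R j ∪ L j then (-1:ℝ)^(T ∩ L j).card else 0)) := by ring
      _ = _ := by rw [hpl]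
  · rw [if_neg hj]
    have h1 : (if R j ⊆ S ∧ S ⊆ R j ∪ L j then (-1:ℝ)^(S ∩ L j).card else 0) = 0 := by
      refine if_neg ?_
      rintro ⟨hRS, hSRL⟩
      exact hj (by rwa [union_comm] at hSRL)
    have h2 : (∑ T ∈ univ.filter (fun T => S ⊆ T ∧ k < T.card),
        ((Nat.choose (T.card - 1) k : ℝ) / (Nat.choose (T.card + k - 1) (k + S.card) : ℝ))
          * (if R j ⊆ T ∧ T ⊆ R j ∪ L j then (-1:ℝ)^(T ∩ L j).card else 0)) = 0 := by
      refine sum_eq_zero fun T hT => ?_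
      have hST : S ⊆ T := (mem_filter.mp hT).2.1
      rw [if_neg, mul_zero]
      rintro ⟨hRT, hTRL⟩
      exact hj (by rw [union_comm]; exact hST.trans hTRL)
    rw [h1, h2]
    ring
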